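/- Let C be a signed graph whose underlying unsigned graph is a cycle. If C has at least one positive edge then a_sd(C) = 1; if all edges of C are negative then a_sd(C) = 2. -/

import Mathlib

open Set

variable {V : Type*}

/-- Number of `G`-neighbors of `v` inside the set `S`. -/
noncomputable def ndegOn (G : SimpleGraph V) (S : Set V) (v : V) : ℕ := (S ∩ {u | G.Adj v u}).ncard

/-- Total number of `G`-neighbors of `v`. -/
noncomputable def ndeg (G : SimpleGraph V) (v : V) : ℕ := {u | G.Adj v u}.ncard

/-- `S` is a defensive alliance in the signed graph `(V, Gp, Gn)`. -/
def IsDefAlliance (Gp Gn : SimpleGraph V) (S : Set V) : Prop :=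
  S.Nonempty ∧ ∀ v ∈ S,
    ndegOn Gn S v ≤ ndegOn Gp S v + 1 ∧ ndegOn Gn Sᶜ v ≤ ndegOn Gp S v + 1

/-- Defensive alliance number: minimum size of a defensive alliance. -/
noncomputable def asd (Gp Gn : SimpleGraph V) : ℕ :=
  sInf {n | ∃ S : Set V, IsDefAlliance Gp Gn S ∧ S.ncard = n}

lemma ndegOn_add_compl [Fintype V] (G : SimpleGraph V) (S : Set V) (v : V) :
    ndegOn G S v + ndegOn G Sᶜ v = ndeg G v := by
  rw [ndegOn, ndegOn, ndeg, ← Set.ncard_union_eq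
      (disjoint_compl_right.mono Set.inter_subset_left Set.inter_subset_left)
      (Set.toFinite _) (Set.toFinite _)]
  congr 1
  rw [← Set.union_inter_distrib_right, Set.union_compl_self, Set.univ_inter]

lemma ndegOn_bot [Fintype V] (S : Set V) (v : V) : ndegOn (⊥ : SimpleGraph V) S v = 0 := by
  simp [ndegOn]

lemma ndegOn_singleton_self [Fintype V] (G : SimpleGraph V) (u : V) :
    ndegOn G {u} u = 0 := by
  have : ({u} : Set V) ∩ {x | G.Adj u x} = ∅ := by
    ext x; simp only [Set.mem_inter_iff, Set.mem_singleton_iff, Set.mem_setOf_eq,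
      Set.mem_empty_iff_false, iff_false, not_and]
    rintro rfl h; exact G.loopless.irrefl _ h
  rw [ndegOn, this, Set.ncard_empty]

lemma ndeg_sup [Fintype V] (Gp Gn : SimpleGraph V) (hdisj : Disjoint Gp Gn) (v : V) :
    ndeg (Gp ⊔ Gn) v = ndeg Gp v + ndeg Gn v := by
  have hd : Disjoint {u | Gp.Adj v u} {u | Gn.Adj v u} := by
    rw [Set.disjoint_left]
    intro x hx1 hx2
    have : (Gp ⊓ Gn).Adj v x := ⟨hx1, hx2⟩
    rw [disjoint_iff.mp hdisj] at this
    exact this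
  have hset : {u | (Gp ⊔ Gn).Adj v u} = {u | Gp.Adj v u} ∪ {u | Gn.Adj v u} := by
    ext x; simp [SimpleGraph.sup_adj]
  rw [ndeg, ndeg, ndeg, hset, Set.ncard_union_eq hd (Set.toFinite _) (Set.toFinite _)]

theorem stmt5 [Fintype V] (Gp Gn : SimpleGraph V) (hdisj : Disjoint Gp Gn)
    (hconn : (Gp ⊔ Gn).Connected) (hreg : ∀ v : V, ndeg (Gp ⊔ Gn) v = 2) :
    ((∃ u v : V, Gp.Adj u v) → asd Gp Gn = 1) ∧ (Gp = ⊥ → asd Gp Gn = 2) := by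
  constructor
  · rintro ⟨u, v, huv⟩
    have hGnu : ndeg Gn u ≤ 1 := by
      have h2 := hreg u
      rw [ndeg_sup Gp Gn hdisj u] at h2
      have hp : 1 ≤ ndeg Gp u := by
        rw [ndeg]
        exact (Set.ncard_pos (Set.toFinite _)).mpr ⟨v, huv⟩
      omega
    have hmem : (1 : ℕ) ∈ {n | ∃ S : Set V, IsDefAlliance Gp Gn S ∧ S.ncard = n} := by
      refine ⟨{u}, ⟨Set.singleton_nonempty u, ?_⟩, Set.ncard_singleton u⟩
      rintro w rfl
      constructor
      · rw [ndegOn_singleton_self]; omega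
      · have := ndegOn_add_compl Gn {w} w
        rw [ndegOn_singleton_self] at this
        omega
    rw [asd]
    have hle := Nat.sInf_le hmem
    have hmem2 := Nat.sInf_mem ⟨1, hmem⟩
    obtain ⟨S, hS, hcard⟩ := hmem2
    have : 1 ≤ S.ncard := (Set.ncard_pos (Set.toFinite _)).mpr hS.1
    rw [hcard] at this
    omega
  · rintro rfl
    -- Gn connected 2-regular; find an edge
    obtain ⟨v⟩ := hconn.nonempty
    have h2 := hreg v
    have hbotsup : (⊥ : SimpleGraph V) ⊔ Gn = Gn := bot_sup_eq Gn
    have hGn : ∀ w, ndeg Gn w = 2 := by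
      intro w; have := hreg w; rwa [hbotsup] at this
    have hNne : {x | Gn.Adj v x}.Nonempty := by
      have h0 : 0 < ndeg Gn v := by rw [hGn]; omega
      rw [ndeg] at h0
      exact (Set.ncard_pos (Set.toFinite _)).mp h0
    obtain ⟨u, huv⟩ := hNne
    have hne : v ≠ u := (huv : Gn.Adj v u).ne
    -- alliance {v, u}
    have key : ∀ a b : V, Gn.Adj a b →
        ndegOn Gn {a, b} a ≤ ndegOn (⊥:SimpleGraph V) {a,b} a + 1 ∧
        ndegOn Gn ({a, b}:Set V)ᶜ a ≤ ndegOn (⊥:SimpleGraph V) {a,b} a + 1 := by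
      intro a b hab
      have hone : ndegOn Gn {a, b} a = 1 := by
        have : ({a, b} : Set V) ∩ {x | Gn.Adj a x} = {b} := by
          ext x
          simp only [Set.mem_inter_iff, Set.mem_insert_iff, Set.mem_singleton_iff,
            Set.mem_setOf_eq]
          constructor
          · rintro ⟨h1 | h1, h2⟩
            · exact absurd h2 (by rw [h1]; exact Gn.loopless.irrefl a)
            · exact h1
          · rintro rfl; exact ⟨Or.inr rfl, hab⟩
        rw [ndegOn, this, Set.ncard_singleton]
      have hsum := ndegOn_add_compl Gn {a, b} a
      rw [hone, hGn a] at hsum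
      rw [ndegOn_bot, hone]
      omega
    have hmem : (2 : ℕ) ∈ {n | ∃ S : Set V, IsDefAlliance (⊥:SimpleGraph V) Gn S ∧ S.ncard = n} := by
      refine ⟨{v, u}, ⟨⟨v, Or.inl rfl⟩, ?_⟩, Set.ncard_pair hne⟩
      intro w hw
      rcases hw with rfl | rfl
      · exact key w u huv
      · have : ({v, w} : Set V) = {w, v} := Set.pair_comm v w
        rw [this]
        exact key w v huv.symm
    rw [asd]
    have hle := Nat.sInf_le hmem
    have hmem2 := Nat.sInf_mem ⟨2, hmem⟩
    obtain ⟨S, hS, hcard⟩ := hmem2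
    have hge : 2 ≤ S.ncard := by
      by_contra h
      push_neg at h
      interval_cases hc : S.ncard
      · exact absurd (Set.ncard_eq_zero (Set.toFinite _) |>.mp hc ▸ hS.1)
          (by simp)
      · obtain ⟨w, rfl⟩ := (Set.ncard_eq_one).mp hc
        obtain ⟨_, h2'⟩ := hS.2 w rfl
        rw [ndegOn_bot] at h2'
        have hsum := ndegOn_add_compl Gn {w} w
        rw [ndegOn_singleton_self, hGn w] at hsum
        omega
    rw [hcard] at hge
    omega
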